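/- Let F be a field of characteristic zero, let n, k, d be natural numbers with k ≥ 1, and let a₁, …, aₙ ∈ F^k (where F^k carries coordinatewise ring operations and its natural F-vector space structure). Consider the polynomial D(x) = (1 + a₁x₁ + ⋯ + aₙxₙ)^d in the polynomial ring (F^k)[x₁, …, xₙ], where 1 denotes the all-ones vector. Then D has a cone-closed basis: there exists a cone-closed finite set B of exponent vectors in ℕ^n such that the coefficients {coeff_{x^m}(D) : m ∈ B} ⊆ F^k form an F-basis of the F-linear span of all coefficients of D. -/

import Mathlib

namespace DiagonalConeClosedAux

open MvPolynomial Finsupp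

variable {F : Type*} [Field F] {n k : ℕ}

noncomputable def vv (a : Fin n → (Fin k → F)) (m : Fin n →₀ ℕ) : Fin k → F :=
  ∏ i, a i ^ m i

lemma vv_add (a : Fin n → (Fin k → F)) (e f : Fin n →₀ ℕ) :
    vv a (e + f) = vv a e * vv a f := by
  simp [vv, pow_add, Finset.prod_mul_distrib]

lemma vv_zero (a : Fin n → (Fin k → F)) : vv a 0 = 1 := by simp [vv]

lemma vv_single (a : Fin n → (Fin k → F)) (i : Fin n) : vv a (single i 1) = a i := by
  rw [vv, Finset.prod_eq_single i]
  · simp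
  · intro j _ hji; simp [single_apply, Ne.symm hji]
  · simp

noncomputable def cc : ℕ → (Fin n →₀ ℕ) → ℕ
  | 0 => fun m => if m = 0 then 1 else 0
  | d+1 => fun m => cc d m + ∑ i ∈ m.support, cc d (m - single i 1)

lemma sub_single_add {m : Fin n →₀ ℕ} {i : Fin n} (hi : i ∈ m.support) :
    m - single i 1 + single i 1 = m := by
  apply tsub_add_cancel_of_le
  rw [single_le_iff]
  exact Nat.one_le_iff_ne_zero.mpr (mem_support_iff.mp hi)

lemma deg_add' (e f : Fin n →₀ ℕ) : (e + f).degree = e.degree + f.degree := by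
  simp [degree_eq_weight_one, map_add]

lemma deg_single' (i : Fin n) : (single i 1 : Fin n →₀ ℕ).degree = 1 := by
  simp [degree_eq_weight_one, weight_apply, sum_single_index]


lemma deg_sub_single {m : Fin n →₀ ℕ} {i : Fin n} (hi : i ∈ m.support) :
    (m - single i 1).degree + 1 = m.degree := by
  conv_rhs => rw [← sub_single_add hi]
  rw [deg_add', deg_single']

lemma cc_pos (d : ℕ) (m : Fin n →₀ ℕ) : 0 < cc d m ↔ m.degree ≤ d := by
  induction d generalizing m with
  | zero =>
    by_cases h : m = 0 <;>
      simp [cc, h, Nat.le_zero, Finsupp.degree_eq_zero_iff]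
  | succ d ih =>
    simp only [cc]
    constructor
    · intro h
      rcases Nat.add_pos_iff_pos_or_pos.mp h with h1 | h2
      · exact le_trans (ih m |>.mp h1) (Nat.le_succ d)
      · have : ∃ i ∈ m.support, cc d (m - single i 1) ≠ 0 := by
          by_contra hc
          push_neg at hc
          exact absurd (Finset.sum_eq_zero hc) (Nat.pos_iff_ne_zero.mp h2)
        obtain ⟨i, hi, hne⟩ := this
        have h3 := (ih _).mp (Nat.pos_of_ne_zero hne)
        have h4 := deg_sub_single hi
        omega
    · intro h
      by_cases h1 : m.degree ≤ d
      · exact Nat.add_pos_left ((ih m).mpr h1) _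
      · have hm : m ≠ 0 := by
          intro h0; rw [h0, map_zero] at h1; omega
        obtain ⟨i, hi⟩ := support_nonempty_iff.mpr hm
        apply Nat.add_pos_right
        apply Finset.sum_pos' (fun j _ => Nat.zero_le _)
        refine ⟨i, hi, (ih _).mpr ?_⟩
        have := deg_sub_single hi
        omega

lemma coeff_mul_lin (a : Fin n → Fin k → F) (Q : MvPolynomial (Fin n) (Fin k → F)) (m : Fin n →₀ ℕ) :
    coeff m (Q * (1 + ∑ i, C (a i) * X i)) =
      coeff m Q + ∑ i ∈ m.support, a i * coeff (m - single i 1) Q := by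
  rw [mul_add, mul_one, Finset.mul_sum, coeff_add, coeff_sum]
  congr 1
  rw [Finset.sum_congr rfl (fun i (_ : i ∈ Finset.univ) => by
    rw [show Q * (C (a i) * X i) = (C (a i) * Q) * X i by ring, coeff_mul_X'])]
  rw [Finset.sum_ite_mem, Finset.univ_inter]
  exact Finset.sum_congr rfl fun i _ => coeff_C_mul _ _ _

lemma coeff_pow (a : Fin n → Fin k → F) (d : ℕ) (m : Fin n →₀ ℕ) :
    coeff m ((1 + ∑ i, C (a i) * X i)^d) = (cc d m : Fin k → F) * vv a m := by
  induction d generalizing m with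
  | zero =>
    by_cases h : m = 0
    · simp [h, cc, vv_zero, coeff_one]
    · simp only [pow_zero, coeff_one, cc, if_neg h, Nat.cast_zero, zero_mul,
        if_neg (fun h' : (0 : Fin n →₀ ℕ) = m => h h'.symm)]
  | succ d ih =>
    rw [pow_succ, coeff_mul_lin]
    simp only [ih]
    have hsum : ∀ i ∈ m.support,
        a i * ((cc d (m - single i 1) : Fin k → F) * vv a (m - single i 1)) =
        (cc d (m - single i 1) : Fin k → F) * vv a m := by
      intro i hi
      obtain ⟨e, rfl⟩ : ∃ e, m = e + single i 1 := ⟨_, (sub_single_add hi).symm⟩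
      simp only [add_tsub_cancel_right]
      rw [vv_add, vv_single]
      ring
    rw [Finset.sum_congr rfl hsum, ← Finset.sum_mul, ← Nat.cast_sum]
    simp only [cc]
    push_cast
    ring

open Submodule

section Main
variable (a : Fin n → (Fin k → F)) (d : ℕ)

noncomputable def ordd (m : Fin n →₀ ℕ) : ℕ ×ₗ (Lex (Fin n →₀ ℕ)) := toLex (m.degree, toLex m)

lemma ordd_lt_iff {e m : Fin n →₀ ℕ} :
    ordd e < ordd m ↔ e.degree < m.degree ∨ (e.degree = m.degree ∧ toLex e < toLex m) := by
  rw [ordd, ordd, Prod.Lex.lt_iff]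
  exact Iff.rfl

lemma ordd_inj : Function.Injective (ordd (n := n)) := by
  intro e m h
  have := congrArg (fun x => (ofLex x).2) h
  simpa [ordd] using this

lemma ordd_add_lt_add_iff {e m f : Fin n →₀ ℕ} :
    ordd (e + f) < ordd (m + f) ↔ ordd e < ordd m := by
  simp only [ordd_lt_iff, deg_add']
  have h1 : toLex (e + f) = toLex e + toLex f := rfl
  have h2 : toLex (m + f) = toLex m + toLex f := rfl
  rw [h1, h2]
  simp

lemma deg_le_of_ordd_lt {e m : Fin n →₀ ℕ} (h : ordd e < ordd m) : e.degree ≤ m.degree := by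
  rcases ordd_lt_iff.mp h with h | ⟨h, _⟩ <;> omega

/-- The candidate cone-closed set. -/
def SS : Set (Fin n →₀ ℕ) :=
  {m | m.degree ≤ d ∧ vv a m ∉ span F (vv a '' {e | ordd e < ordd m})}

lemma shift_mem_span {m f : Fin n →₀ ℕ}
    (h : vv a m ∈ span F (vv a '' {e | ordd e < ordd m})) :
    vv a (m + f) ∈ span F (vv a '' {e | ordd e < ordd (m + f)}) := by
  have h2 := Submodule.apply_mem_span_image_of_mem_span (LinearMap.mulRight F (vv a f)) h
  rw [Set.image_image] at h2
  have h3 : (fun e => (LinearMap.mulRight F (vv a f)) (vv a e)) '' {e | ordd e < ordd m} ⊆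
      vv a '' {e | ordd e < ordd (m + f)} := by
    rintro x ⟨e, he, rfl⟩
    exact ⟨e + f, ordd_add_lt_add_iff.mpr he, by simp [vv_add]⟩
  have h4 : vv a (m + f) = (LinearMap.mulRight F (vv a f)) (vv a m) := (vv_add a m f)
  rw [h4]
  exact span_mono h3 h2

lemma SS_cone_closed {m : Fin n →₀ ℕ} (hm : m ∈ SS a d) {e : Fin n →₀ ℕ} (he : e ≤ m) :
    e ∈ SS a d := by
  obtain ⟨f, rfl⟩ := exists_add_of_le he
  refine ⟨le_trans (by simp [deg_add']) hm.1, fun hsp => hm.2 (shift_mem_span a hsp)⟩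

lemma SS_indep : LinearIndependent F (fun m : SS a d => vv a (m : Fin n →₀ ℕ)) := by
  rw [linearIndependent_iff']
  intro s g hsum i his
  by_contra hgi
  classical
  set t := s.filter (fun j => g j ≠ 0) with ht
  have htne : t.Nonempty := ⟨i, Finset.mem_filter.mpr ⟨his, hgi⟩⟩
  obtain ⟨b, hbt, hbmax⟩ := t.exists_max_image (fun j => ordd (j : Fin n →₀ ℕ)) htne
  have hsum' : ∑ j ∈ t, g j • vv a (j : Fin n →₀ ℕ) = 0 := by
    rw [ht, Finset.sum_filter_of_ne (fun x _ hx => by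
      intro h0; apply hx; rw [h0, zero_smul])]
    exact hsum
  have hgb : g b ≠ 0 := (Finset.mem_filter.mp hbt).2
  rw [← Finset.add_sum_erase t _ hbt] at hsum'
  have hb2 : g b • vv a (b : Fin n →₀ ℕ) =
      -∑ j ∈ t.erase b, g j • vv a (j : Fin n →₀ ℕ) :=
    eq_neg_of_add_eq_zero_left hsum'
  have hvb : vv a (b : Fin n →₀ ℕ) ∈
      span F (vv a '' {e | ordd e < ordd (b : Fin n →₀ ℕ)}) := by
    have hrw : vv a (b : Fin n →₀ ℕ) = (g b)⁻¹ • (g b • vv a (b : Fin n →₀ ℕ)) := by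
      rw [smul_smul, inv_mul_cancel₀ hgb, one_smul]
    rw [hrw, hb2]
    refine Submodule.smul_mem _ _ (neg_mem (Submodule.sum_smul_mem _ _ fun c hc => ?_))
    have hcb : c ≠ b := (Finset.mem_erase.mp hc).1
    have hlt : ordd (c : Fin n →₀ ℕ) < ordd (b : Fin n →₀ ℕ) := by
      refine lt_of_le_of_ne (hbmax c (Finset.mem_of_mem_erase hc)) fun heq => ?_
      exact hcb (Subtype.ext (ordd_inj heq))
    exact subset_span (Set.mem_image_of_mem _ hlt)
  exact b.2.2 hvb

lemma SS_finite : (SS a d).Finite := Set.finite_coe_iff.mp (SS_indep a d).finite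

lemma SS_span (m : Fin n →₀ ℕ) (hdeg : m.degree ≤ d) :
    vv a m ∈ span F (vv a '' SS a d) := by
  have wf : WellFounded (fun x y : Fin n →₀ ℕ => ordd x < ordd y) :=
    InvImage.wf ordd wellFounded_lt
  induction m using WellFounded.induction wf with
  | _ m ih =>
  by_cases hm : m ∈ SS a d
  · exact subset_span (Set.mem_image_of_mem _ hm)
  · have hsp : vv a m ∈ span F (vv a '' {e | ordd e < ordd m}) := by
      by_contra hc
      exact hm ⟨hdeg, hc⟩
    refine span_le.mpr ?_ hsp
    rintro x ⟨e, he, rfl⟩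
    exact ih e he (le_trans (deg_le_of_ordd_lt he) hdeg)

lemma natCast_mul_eq_smul (c : ℕ) (w : Fin k → F) : (c : Fin k → F) * w = (c : F) • w := by
  funext j; simp

end Main

set_option maxHeartbeats 1000000 in
theorem final
    (F : Type*) [Field F] [CharZero F] (n k d : ℕ) (hk : 1 ≤ k)
    (a : Fin n → (Fin k → F))
    (D : MvPolynomial (Fin n) (Fin k → F))
    (hD : D = (1 + ∑ i, MvPolynomial.C (a i) * MvPolynomial.X i) ^ d) :
    ∃ B : Finset (Fin n →₀ ℕ),
      (∀ m ∈ B, ∀ e : Fin n →₀ ℕ, e ≤ m → e ∈ B) ∧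
      LinearIndependent F (fun m : B => MvPolynomial.coeff (m : Fin n →₀ ℕ) D) ∧
      Submodule.span F ((fun m => MvPolynomial.coeff m D) '' ↑B) =
        Submodule.span F (Set.range fun m => MvPolynomial.coeff m D) := by
  classical
  have hcoeff : ∀ m : Fin n →₀ ℕ, coeff m D = (cc d m : F) • vv a m := fun m => by
    rw [hD, coeff_pow, natCast_mul_eq_smul]
  obtain ⟨B, hB⟩ : ∃ B : Finset (Fin n →₀ ℕ), ∀ x, x ∈ B ↔ x ∈ SS a d :=
    ⟨(SS_finite a d).toFinset, fun x => Set.Finite.mem_toFinset _⟩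
  have hcast : ∀ m ∈ SS a d, (cc d m : F) ≠ 0 := fun m hm =>
    Nat.cast_ne_zero.mpr (Nat.pos_iff_ne_zero.mp ((cc_pos d m).mpr hm.1))
  refine ⟨B, ?_, ?_, ?_⟩
  · intro m hm e he
    rw [hB] at *
    exact SS_cone_closed a d hm he
  · have hSm : ∀ m : B, (m : Fin n →₀ ℕ) ∈ SS a d := fun m => (hB _).mp m.2
    obtain ⟨f0, hf0⟩ : ∃ f0 : {x // x ∈ B} → {x // x ∈ SS a d},
        ∀ m, (f0 m : Fin n →₀ ℕ) = (m : Fin n →₀ ℕ) :=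
      ⟨fun m => ⟨m.1, hSm m⟩, fun m => rfl⟩
    have hinj : Function.Injective f0 := fun x y h =>
      Subtype.ext (by rw [← hf0 x, ← hf0 y, h])
    have hind0 : LinearIndependent F (fun m : B => vv a (m : Fin n →₀ ℕ)) := by
      have hc := (SS_indep a d).comp f0 hinj
      have heq : (fun m : B => vv a (m : Fin n →₀ ℕ)) =
          (fun m : SS a d => vv a (m : Fin n →₀ ℕ)) ∘ f0 :=
        funext fun m => by rw [Function.comp_apply, hf0]
      rw [heq]
      exact hc
    set w : B → Fˣ := fun m => Units.mk0 _ (hcast _ (hSm m)) with hw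
    have hfun : (fun m : B => coeff (m : Fin n →₀ ℕ) D) =
        (w • fun m : B => vv a (m : Fin n →₀ ℕ)) := by
      funext m
      rw [Pi.smul_apply', hcoeff]
      simp [hw, Units.smul_def]
    rw [hfun]
    exact hind0.units_smul w
  · apply le_antisymm
    · exact span_mono (Set.image_subset_range _ _)
    · rw [span_le]
      rintro x ⟨m, rfl⟩
      by_cases hdm : m.degree ≤ d
      · have h1 : vv a m ∈ span F (vv a '' SS a d) := SS_span a d m hdm
        have h2 : span F (vv a '' SS a d) ≤
            span F ((fun m => coeff m D) '' ↑B) := by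
          rw [span_le]
          rintro y ⟨s, hs, rfl⟩
          have hceq : vv a s = (cc d s : F)⁻¹ • coeff s D := by
            rw [hcoeff, smul_smul, inv_mul_cancel₀ (hcast s hs), one_smul]
          rw [hceq]
          exact Submodule.smul_mem _ _
            (subset_span ⟨s, (hB s).mpr hs, rfl⟩)
        show coeff m D ∈ span F ((fun m => coeff m D) '' ↑B)
        rw [hcoeff]
        exact Submodule.smul_mem _ _ (h2 h1)
      · have hz : cc d m = 0 := by
          have := cc_pos d m
          omega
        show coeff m D ∈ span F ((fun m => coeff m D) '' ↑B)
        rw [hcoeff, hz]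
        simp

end DiagonalConeClosedAux

/-- **Diagonal depth-3 circuits have a cone-closed basis.** Over a characteristic
zero field `F`, the polynomial `D = (1 + a₁x₁ + ⋯ + aₙxₙ)^d` with coefficients in
the `F`-algebra `F^k` has a cone-closed set `B` of exponent vectors whose
coefficients form an `F`-basis of the span of all coefficients of `D`. -/
theorem diagonal_depth3_cone_closed_basis
    (F : Type*) [Field F] [CharZero F] (n k d : ℕ) (hk : 1 ≤ k)
    (a : Fin n → (Fin k → F))
    (D : MvPolynomial (Fin n) (Fin k → F))
    (hD : D = (1 + ∑ i, MvPolynomial.C (a i) * MvPolynomial.X i) ^ d) :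
    ∃ B : Finset (Fin n →₀ ℕ),
      (∀ m ∈ B, ∀ e : Fin n →₀ ℕ, e ≤ m → e ∈ B) ∧
      LinearIndependent F (fun m : B => MvPolynomial.coeff (m : Fin n →₀ ℕ) D) ∧
      Submodule.span F ((fun m => MvPolynomial.coeff m D) '' ↑B) =
        Submodule.span F (Set.range fun m => MvPolynomial.coeff m D) := by
  exact DiagonalConeClosedAux.final F n k d hk a D hD
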